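/- Let D be a k×k Metzler matrix, c > 0, μ ≤ 0, and ξ ∈ ℝ^k a positive right eigenvector of D with D ξ = μ ξ; set ξ̲ = min_i ξ_i and ξ̄ = max_i ξ_i. Let u : [0,∞) → ℝ^k be a nonnegative solution of the cumulant system with u_0 = λ ∈ ℝ^k, λ ≥ 0, and C_0 = max_i λ_i/ξ_i. If μ = 0, then for all t ≥ 0, u_t ≥ (1 + (c ξ̲ / 2) C_0 t)^{−ξ̄/ξ̲} · e^{Dt} λ componentwise. If μ < 0, then for all t ≥ 0, u_t ≥ (1 + (c ξ̲ / (2|μ|)) C_0 (1 − e^{μ t}))^{−ξ̄/ξ̲} · e^{Dt} λ componentwise, where e^{Dt} is the matrix exponential. -/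

import Mathlib

open Filter Topology Set

lemma key_nonneg {ι : Type*} [Fintype ι] [Nonempty ι]
    (y y' : ℝ → ι → ℝ) (T K : ℝ) (hK : 0 ≤ K)
    (hd : ∀ t ∈ Set.Icc (0:ℝ) T, ∀ i, HasDerivAt (fun s => y s i) (y' t i) t)
    (h0 : ∀ i, 0 ≤ y 0 i)
    (hb : ∀ t ∈ Set.Icc (0:ℝ) T, ∀ i, y t i ≤ 0 →
      -(K * (Finset.univ.sup' Finset.univ_nonempty fun j => max (-(y t j)) 0)) ≤ y' t i) :
    ∀ t ∈ Set.Icc (0:ℝ) T, ∀ i, 0 ≤ y t i := by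
  classical
  set φ : ι → ℝ → ℝ := fun j t => max (-(y t j)) 0 with hφ
  set m : ℝ → ℝ := fun t => Finset.univ.sup' Finset.univ_nonempty fun j => φ j t with hm
  have hm_ge : ∀ t j, φ j t ≤ m t := fun t j =>
    Finset.le_sup' (f := fun j => φ j t) (Finset.mem_univ j)
  have hm_nonneg : ∀ t, 0 ≤ m t := fun t =>
    le_trans (le_max_right _ 0) (hm_ge t (Classical.arbitrary ι))
  have hym : ∀ t j, -(m t) ≤ y t j := fun t j => by
    have := le_trans (le_max_left (-(y t j)) 0) (hm_ge t j)
    linarith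
  have hycont : ∀ i, ContinuousOn (fun t => y t i) (Icc 0 T) := fun i t ht =>
    (hd t ht i).continuousAt.continuousWithinAt
  have hmcont : ContinuousOn m (Icc 0 T) := by
    apply ContinuousOn.finset_sup'_apply
    intro j _
    exact ((hycont j).neg).sup continuousOn_const
  have key : ∀ x ∈ Icc 0 T, m x ≤ gronwallBound 0 K 0 (x - 0) := by
    apply le_gronwallBound_of_liminf_deriv_right_le (f' := fun t => K * m t) hmcont
    · -- liminf condition
      intro x hx r hr
      have hx' : x ∈ Icc (0:ℝ) T := Ico_subset_Icc_self hx
      have hKm : 0 ≤ K * m x := mul_nonneg hK (hm_nonneg x)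
      have hr0 : 0 < r := lt_of_le_of_lt hKm hr
      have hper : ∀ j, ∀ᶠ z in 𝓝[>] x, (z - x)⁻¹ * (φ j z - φ j x) < r := by
        intro j
        have hcont : Tendsto (fun s => y s j) (𝓝 x) (𝓝 (y x j)) :=
          (hd x hx' j).continuousAt.tendsto
        have hslope : Tendsto (slope (fun s => y s j) x) (𝓝[>] x) (𝓝 (y' x j)) :=
          (hasDerivAt_iff_tendsto_slope.1 (hd x hx' j)).mono_left
            (nhdsWithin_mono x fun z hz => ne_of_gt hz)
        rcases lt_trichotomy (y x j) 0 with hneg | hzero | hpos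
        · -- y x j < 0
          have hb' := hb x hx' j hneg.le
          have hlt : -(y' x j) < r := by linarith
          have hev1 : ∀ᶠ z in 𝓝[>] x, -(slope (fun s => y s j) x z) < r :=
            (hslope.neg).eventually_lt_const hlt
          have hev0 : ∀ᶠ z in 𝓝[>] x, y z j < 0 :=
            (hcont.eventually_lt_const hneg).filter_mono nhdsWithin_le_nhds
          filter_upwards [hev1, hev0, self_mem_nhdsWithin] with z h1 h2 hz
          have hzx : (0:ℝ) < z - x := sub_pos.2 hz
          have e1 : φ j z = -(y z j) := max_eq_left (by linarith)
          have e2 : φ j x = -(y x j) := max_eq_left (by linarith)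
          rw [e1, e2]
          have : slope (fun s => y s j) x z = (y z j - y x j) / (z - x) :=
            slope_def_field _ _ _
          rw [this] at h1
          have hne : z - x ≠ 0 := ne_of_gt hzx
          calc (z - x)⁻¹ * (-(y z j) - -(y x j))
              = -((y z j - y x j) / (z - x)) := by field_simp; ring
            _ < r := h1
        · -- y x j = 0
          have hb' := hb x hx' j hzero.le
          have hlt : -(y' x j) < r := by linarith
          have hev1 : ∀ᶠ z in 𝓝[>] x, -(slope (fun s => y s j) x z) < r :=
            (hslope.neg).eventually_lt_const hlt
          filter_upwards [hev1, self_mem_nhdsWithin] with z h1 hz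
          have hzx : (0:ℝ) < z - x := sub_pos.2 hz
          have hne : z - x ≠ 0 := ne_of_gt hzx
          have e2 : φ j x = 0 := by rw [hφ]; simp [hzero]
          have hsl : slope (fun s => y s j) x z = (y z j) / (z - x) := by
            rw [slope_def_field, hzero, sub_zero]
          rw [hsl] at h1
          rw [e2, sub_zero]
          have : (z - x)⁻¹ * φ j z = max (-(y z j / (z - x))) 0 := by
            rw [hφ]
            simp only []
            rw [mul_max_of_nonneg _ _ (le_of_lt (inv_pos.2 hzx)), mul_zero]
            congr 1
            field_simp
          rw [this]
          exact max_lt h1 hr0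
        · -- y x j > 0
          have hev0 : ∀ᶠ z in 𝓝[>] x, 0 < y z j :=
            (hcont.eventually_const_lt hpos).filter_mono nhdsWithin_le_nhds
          filter_upwards [hev0, self_mem_nhdsWithin] with z h2 hz
          have e1 : φ j z = 0 := max_eq_right (by linarith)
          have e2 : φ j x = 0 := max_eq_right (by linarith)
          rw [e1, e2, sub_zero, mul_zero]
          exact hr0
      have hall : ∀ᶠ z in 𝓝[>] x, (∀ j, (z - x)⁻¹ * (φ j z - φ j x) < r) ∧ x < z :=
        (eventually_all.2 hper).and self_mem_nhdsWithin
      apply hall.frequently.mono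
      rintro z ⟨hj, hz⟩
      obtain ⟨j₀, -, hj₀⟩ := Finset.exists_mem_eq_sup' (Finset.univ_nonempty (α := ι))
        (fun j => φ j z)
      have hzx : (0:ℝ) ≤ (z - x)⁻¹ := le_of_lt (inv_pos.2 (sub_pos.2 hz))
      have : m z - m x ≤ φ j₀ z - φ j₀ x := by
        have h1 : m z = φ j₀ z := hj₀
        have h2 : φ j₀ x ≤ m x := hm_ge x j₀
        linarith
      calc (z - x)⁻¹ * (m z - m x) ≤ (z - x)⁻¹ * (φ j₀ z - φ j₀ x) :=
            mul_le_mul_of_nonneg_left this hzx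
        _ < r := hj j₀
    · -- m 0 ≤ 0
      apply Finset.sup'_le
      intro j _
      have := h0 j
      simp only [hφ, max_le_iff]
      constructor <;> linarith
    · intro x hx
      simp
  intro t ht i
  have h1 := key t ht
  rw [gronwallBound_ε0_δ0] at h1
  have h2 := le_trans (hm_ge t i) h1
  have h3 := le_trans (le_max_left (-(y t i)) 0) h2
  linarith

lemma metzler_nonneg {k : ℕ} [Nonempty (Fin k)] (D : Matrix (Fin k) (Fin k) ℝ)
    (hM : ∀ i j, i ≠ j → 0 ≤ D i j)
    (y y' : ℝ → Fin k → ℝ)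
    (hd : ∀ t ∈ Set.Ici (0:ℝ), ∀ i, HasDerivAt (fun s => y s i) (y' t i) t)
    (h0 : ∀ i, 0 ≤ y 0 i)
    (hb : ∀ t ∈ Set.Ici (0:ℝ), ∀ i, y t i ≤ 0 → (D.mulVec (y t)) i ≤ y' t i) :
    ∀ t ∈ Set.Ici (0:ℝ), ∀ i, 0 ≤ y t i := by
  classical
  intro T hT i
  set K : ℝ := Finset.univ.sup' Finset.univ_nonempty (fun i => ∑ j, |D i j|) with hK
  have hKle : ∀ i, (∑ j, |D i j|) ≤ K := fun i =>
    Finset.le_sup' (f := fun i => ∑ j, |D i j|) (Finset.mem_univ i)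
  have hK0 : 0 ≤ K :=
    le_trans (Finset.sum_nonneg fun j _ => abs_nonneg _) (hKle (Classical.arbitrary _))
  refine key_nonneg y y' T K hK0 (fun t ht => hd t ht.1) h0 ?_ T ⟨hT, le_refl T⟩ i
  intro t ht q hyq
  refine le_trans ?_ (hb t ht.1 q hyq)
  set m := Finset.univ.sup' Finset.univ_nonempty fun j => max (-(y t j)) 0 with hm
  have hm_nonneg : 0 ≤ m :=
    le_trans (le_max_right _ 0)
      (Finset.le_sup' (f := fun j => max (-(y t j)) 0) (Finset.mem_univ (Classical.arbitrary _)))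
  have hym : ∀ j, -m ≤ y t j := fun j => by
    have := le_trans (le_max_left (-(y t j)) 0)
      (Finset.le_sup' (f := fun j => max (-(y t j)) 0) (Finset.mem_univ j))
    linarith
  have hterm : ∀ j, -(|D q j| * m) ≤ D q j * y t j := by
    intro j
    rcases le_or_gt 0 (D q j) with hD | hD
    · rw [abs_of_nonneg hD]
      have := mul_le_mul_of_nonneg_left (hym j) hD
      linarith
    · have hji : j = q := by
        by_contra hne
        exact absurd (hM q j (fun h => hne h.symm)) (not_le.2 hD)
      have hyj : y t j ≤ 0 := by rw [hji]; exact hyq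
      have h1 : 0 ≤ D q j * y t j := by
        have := mul_nonneg (neg_nonneg.2 hD.le) (neg_nonneg.2 hyj)
        nlinarith
      have h2 : 0 ≤ |D q j| * m := mul_nonneg (abs_nonneg _) hm_nonneg
      linarith
  calc -(K * m) ≤ -((∑ j, |D q j|) * m) := by
        have := mul_le_mul_of_nonneg_right (hKle q) hm_nonneg
        linarith
    _ = ∑ j, -(|D q j| * m) := by rw [Finset.sum_mul]; simp [Finset.sum_neg_distrib]
    _ ≤ ∑ j, D q j * y t j := Finset.sum_le_sum fun j _ => hterm j
    _ = (D.mulVec (y t)) q := by simp [Matrix.mulVec, dotProduct]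

lemma expEntry_hasDerivAt {k : ℕ} (D : Matrix (Fin k) (Fin k) ℝ) (lam : Fin k → ℝ)
    (i : Fin k) (t : ℝ) :
    HasDerivAt (fun s : ℝ => (NormedSpace.exp (s • D)).mulVec lam i)
      (D.mulVec ((NormedSpace.exp (t • D)).mulVec lam) i) t := by
  letI : SeminormedRing (Matrix (Fin k) (Fin k) ℝ) := Matrix.linftyOpSemiNormedRing
  letI : NormedRing (Matrix (Fin k) (Fin k) ℝ) := Matrix.linftyOpNormedRing
  letI : NormedAlgebra ℝ (Matrix (Fin k) (Fin k) ℝ) := Matrix.linftyOpNormedAlgebra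
  have h := hasDerivAt_exp_smul_const' (𝕂 := ℝ) D t
  let L : Matrix (Fin k) (Fin k) ℝ →ₗ[ℝ] ℝ :=
    { toFun := fun M => M.mulVec lam i
      map_add' := fun A B => by simp [Matrix.add_mulVec]
      map_smul' := fun r A => by simp [Matrix.smul_mulVec] }
  have hL := (LinearMap.toContinuousLinearMap L).hasFDerivAt
      (x := NormedSpace.exp (t • D))
  have h2 := hL.comp_hasDerivAt t h
  exact h2.congr_deriv (by simp [L, Matrix.mulVec_mulVec]; rfl)

lemma expEntry_zero {k : ℕ} (D : Matrix (Fin k) (Fin k) ℝ) (lam : Fin k → ℝ) :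
    (NormedSpace.exp ((0:ℝ) • D)).mulVec lam = lam := by
  rw [zero_smul, NormedSpace.exp_zero, Matrix.one_mulVec]

lemma master {k : ℕ} (hk : 0 < k) (c : ℝ) (hc : 0 < c)
    (D : Matrix (Fin k) (Fin k) ℝ) (hM : ∀ i j, i ≠ j → 0 ≤ D i j)
    (μ : ℝ) (ξ : Fin k → ℝ) (hξpos : ∀ i, 0 < ξ i)
    (heig : D.mulVec ξ = μ • ξ)
    (lam : Fin k → ℝ) (hlam : ∀ i, 0 ≤ lam i)
    (u : ℝ → Fin k → ℝ)
    (hsol : ∀ t ∈ Set.Ici (0:ℝ), HasDerivAt u (D.mulVec (u t) - (c/2) • (u t * u t)) t)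
    (hnonneg : ∀ t ∈ Set.Ici (0:ℝ), ∀ i, 0 ≤ u t i)
    (hinit : u 0 = lam)
    (ξmin ξmax : ℝ) (hξminle : ∀ i, ξmin ≤ ξ i) (hξmaxle : ∀ i, ξ i ≤ ξmax)
    (hξminpos : 0 < ξmin)
    (f g : ℝ → ℝ)
    (hflam : ∀ i, lam i ≤ f 0 * ξ i)
    (hfnn : ∀ t ∈ Set.Ici (0:ℝ), 0 ≤ f t)
    (hfd : ∀ t ∈ Set.Ici (0:ℝ), HasDerivAt f (μ * f t - c/2 * ξmin * (f t)^2) t)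
    (hg0 : g 0 = 1)
    (hgpos : ∀ t ∈ Set.Ici (0:ℝ), 0 < g t)
    (hgd : ∀ t ∈ Set.Ici (0:ℝ), HasDerivAt g (c * ξmin / 2 * f t * g t) t) :
    ∀ t ≥ (0:ℝ), ∀ i, g t ^ (-(ξmax / ξmin)) * ((NormedSpace.exp (t • D)).mulVec lam) i
      ≤ u t i := by
  haveI : Nonempty (Fin k) := ⟨⟨0, hk⟩⟩
  have hξmaxpos : 0 < ξmax := lt_of_lt_of_le hξminpos
    (le_trans (hξminle (Classical.arbitrary _)) (hξmaxle (Classical.arbitrary _)))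
  have hui : ∀ t ∈ Set.Ici (0:ℝ), ∀ i, HasDerivAt (fun s => u s i)
      ((D.mulVec (u t)) i - c/2 * (u t i * u t i)) t := by
    intro t ht i
    have h := (ContinuousLinearMap.proj (R := ℝ) (φ := fun _ : Fin k => ℝ)
      i).hasFDerivAt.comp_hasDerivAt t (hsol t ht)
    exact h
  set z : ℝ → Fin k → ℝ := fun t => (NormedSpace.exp (t • D)).mulVec lam with hz
  have hzd : ∀ t ∈ Set.Ici (0:ℝ), ∀ i,
      HasDerivAt (fun s => z s i) ((D.mulVec (z t)) i) t :=
    fun t _ i => expEntry_hasDerivAt D lam i t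
  have hz0 : z 0 = lam := expEntry_zero D lam
  have hznn : ∀ t ∈ Set.Ici (0:ℝ), ∀ i, 0 ≤ z t i := by
    apply metzler_nonneg D hM z (fun t => D.mulVec (z t)) hzd
    · intro i; rw [hz0]; exact hlam i
    · exact fun t _ i _ => le_refl _
  -- STEP B : upper bound u t i ≤ f t * ξ i
  have hub : ∀ t ∈ Set.Ici (0:ℝ), ∀ i, u t i ≤ f t * ξ i := by
    have hB := metzler_nonneg D hM (fun t i => f t * ξ i - u t i)
      (fun t i => (μ * f t - c/2 * ξmin * (f t)^2) * ξ i
        - ((D.mulVec (u t)) i - c/2 * (u t i * u t i)))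
      (fun t ht i => ((hfd t ht).mul_const (ξ i)).sub (hui t ht i))
      (fun i => by show 0 ≤ f 0 * ξ i - u 0 i; rw [hinit]; linarith [hflam i])
      ?_
    · intro t ht i
      have h' : 0 ≤ f t * ξ i - u t i := hB t ht i
      linarith
    · intro t ht i hyi
      have hyi' : f t * ξ i - u t i ≤ 0 := hyi
      show (D.mulVec (fun j => f t * ξ j - u t j)) i
        ≤ (μ * f t - c/2 * ξmin * (f t)^2) * ξ i
          - ((D.mulVec (u t)) i - c/2 * (u t i * u t i))
      have hDy : (D.mulVec (fun j => f t * ξ j - u t j)) i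
          = f t * (μ * ξ i) - (D.mulVec (u t)) i := by
        have e : (fun j => f t * ξ j - u t j) = f t • ξ - u t := by
          funext j; simp [mul_comm]
        rw [e, Matrix.mulVec_sub, Matrix.mulVec_smul, heig]
        simp [mul_comm, mul_left_comm]
      rw [hDy]
      have hfnn' := hfnn t ht
      have hξi := hξpos i
      have hξm := hξminle i
      have hsq : ξmin * (f t)^2 * ξ i ≤ (f t * ξ i) * (f t * ξ i) := by nlinarith
      have hup : (f t * ξ i) * (f t * ξ i) ≤ u t i * u t i :=
        mul_self_le_mul_self (mul_nonneg hfnn' hξi.le) (by linarith)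
      nlinarith [hsq, hup, hc.le]
  -- STEP C : the function h = g ^ (-(ξmax/ξmin))
  set q : ℝ := -(ξmax / ξmin) with hq
  set h : ℝ → ℝ := fun t => g t ^ q with hh
  have hhd : ∀ t ∈ Set.Ici (0:ℝ),
      HasDerivAt h (-(c/2) * ξmax * f t * h t) t := by
    intro t ht
    have hgne := (hgpos t ht).ne'
    have hder := (hgd t ht).rpow_const (p := q) (Or.inl hgne)
    convert hder using 1
    show -(c/2) * ξmax * f t * g t ^ q = c * ξmin / 2 * f t * g t * q * g t ^ (q - 1)
    have e1 : g t ^ (q - 1) = g t ^ q / g t := Real.rpow_sub_one hgne q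
    rw [e1, hq]
    field_simp
  have hh0 : h 0 = 1 := by rw [hh]; simp [hg0]
  have hhnn : ∀ t ∈ Set.Ici (0:ℝ), 0 ≤ h t := fun t ht =>
    (Real.rpow_pos_of_pos (hgpos t ht) q).le
  -- STEP D : lower bound
  have hlb := metzler_nonneg D hM (fun t i => u t i - h t * z t i)
    (fun t i => ((D.mulVec (u t)) i - c/2 * (u t i * u t i))
      - ((-(c/2) * ξmax * f t * h t) * z t i + h t * (D.mulVec (z t)) i))
    (fun t ht i => (hui t ht i).sub (((hhd t ht).mul (hzd t ht i))))
    (fun i => by show 0 ≤ u 0 i - h 0 * z 0 i; rw [hinit, hh0, hz0]; simp)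
    ?_
  · intro t ht i
    have h' : 0 ≤ u t i - h t * z t i := hlb t ht i
    have e : h t = g t ^ (-(ξmax / ξmin)) := by rw [hh, hq]
    rw [← e]
    linarith
  · intro t ht i hyi
    have hyi' : u t i - h t * z t i ≤ 0 := hyi
    show (D.mulVec (fun j => u t j - h t * z t j)) i
      ≤ ((D.mulVec (u t)) i - c/2 * (u t i * u t i))
        - ((-(c/2) * ξmax * f t * h t) * z t i + h t * (D.mulVec (z t)) i)
    have hDy : (D.mulVec (fun j => u t j - h t * z t j)) i
        = (D.mulVec (u t)) i - h t * (D.mulVec (z t)) i := by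
      have e : (fun j => u t j - h t * z t j) = u t - h t • z t := by
        funext j; simp
      rw [e, Matrix.mulVec_sub, Matrix.mulVec_smul]
      simp
    rw [hDy]
    have h1 : u t i ≤ h t * z t i := by linarith
    have h2 : u t i ≤ f t * ξ i := hub t ht i
    have h3 : 0 ≤ u t i := hnonneg t ht i
    have hfnn' := hfnn t ht
    have h4 : u t i ≤ f t * ξmax :=
      le_trans h2 (mul_le_mul_of_nonneg_left (hξmaxle i) hfnn')
    have h5 : u t i * u t i ≤ (f t * ξmax) * (h t * z t i) :=
      le_trans (mul_le_mul_of_nonneg_right h4 h3)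
        (mul_le_mul_of_nonneg_left h1 (mul_nonneg hfnn' hξmaxpos.le))
    nlinarith

open Filter Topology

/-- (Lemma 2.3 (iv) of the paper.) Lower bound on a nonnegative solution
of the cumulant system in terms of the matrix exponential `e^{Dt} λ`, in the critical
(`μ = 0`) and subcritical (`μ < 0`) cases. Here `ξ̲ = min_i ξ_i`, `ξ̄ = max_i ξ_i` and
`C_0 = max_i λ_i / ξ_i`. -/
theorem stmt4 (k : ℕ) (hk : 1 ≤ k) (c : ℝ) (hc : 0 < c)
    (D : Matrix (Fin k) (Fin k) ℝ)
    (hMetzler : ∀ i j : Fin k, i ≠ j → 0 ≤ D i j)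
    (μ : ℝ) (hμ : μ ≤ 0) (ξ : Fin k → ℝ) (hξpos : ∀ i, 0 < ξ i)
    (heig : D.mulVec ξ = μ • ξ)
    (lam : Fin k → ℝ) (hlam : ∀ i, 0 ≤ lam i)
    (u : ℝ → Fin k → ℝ)
    (hsol : ∀ t ∈ Set.Ici (0 : ℝ),
      HasDerivAt u (D.mulVec (u t) - (c / 2) • (u t * u t)) t)
    (hnonneg : ∀ t ∈ Set.Ici (0 : ℝ), ∀ i : Fin k, 0 ≤ u t i)
    (hinit : u 0 = lam)
    (C₀ ξmin ξmax : ℝ) (hC₀ : C₀ = ⨆ i, lam i / ξ i)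
    (hξmin : ξmin = ⨅ i, ξ i) (hξmax : ξmax = ⨆ i, ξ i) :
    (μ = 0 →
      ∀ t ≥ (0 : ℝ), ∀ i : Fin k,
        (1 + c * ξmin / 2 * C₀ * t) ^ (-(ξmax / ξmin)) *
          ((NormedSpace.exp (t • D)).mulVec lam) i ≤ u t i) ∧
    (μ < 0 →
      ∀ t ≥ (0 : ℝ), ∀ i : Fin k,
        (1 + c * ξmin / (2 * |μ|) * C₀ * (1 - Real.exp (μ * t))) ^ (-(ξmax / ξmin)) *
          ((NormedSpace.exp (t • D)).mulVec lam) i ≤ u t i) := by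
  have hk0 : 0 < k := hk
  haveI : Nonempty (Fin k) := Fin.pos_iff_nonempty.1 hk0
  have hξminle : ∀ i, ξmin ≤ ξ i := fun i => by
    rw [hξmin]; exact ciInf_le (Set.Finite.bddBelow (Set.finite_range ξ)) i
  have hξmaxle : ∀ i, ξ i ≤ ξmax := fun i => by
    rw [hξmax]; exact le_ciSup (Set.Finite.bddAbove (Set.finite_range ξ)) i
  have hξminpos : 0 < ξmin := by
    obtain ⟨j, hj⟩ : ∃ j, ξ j = ⨅ i, ξ i := exists_eq_ciInf_of_finite
    rw [hξmin, ← hj]; exact hξpos j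
  have hC0i : ∀ i, lam i / ξ i ≤ C₀ := fun i => by
    rw [hC₀]; exact le_ciSup (Set.Finite.bddAbove (Set.finite_range (fun i => lam i / ξ i))) i
  have hC0nn : 0 ≤ C₀ := by
    have i0 : Fin k := Classical.arbitrary _
    exact le_trans (div_nonneg (hlam i0) (hξpos i0).le) (hC0i i0)
  have hflam : ∀ i, lam i ≤ C₀ * ξ i := fun i => by
    have := (div_le_iff₀ (hξpos i)).1 (hC0i i)
    linarith [this]
  constructor
  · -- critical case μ = 0
    intro hμ0 t ht i
    subst hμ0
    set g : ℝ → ℝ := fun t => 1 + c * ξmin / 2 * C₀ * t with hg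
    set f : ℝ → ℝ := fun t => C₀ / g t with hf
    have ha : 0 ≤ c * ξmin / 2 * C₀ :=
      mul_nonneg (div_nonneg (mul_nonneg hc.le hξminpos.le) (by norm_num)) hC0nn
    have hgpos : ∀ s ∈ Set.Ici (0:ℝ), 0 < g s := by
      intro s hs
      have : 0 ≤ c * ξmin / 2 * C₀ * s := mul_nonneg ha hs
      simp only [hg]; linarith
    have hg0 : g 0 = 1 := by simp [hg]
    have hgd : ∀ s ∈ Set.Ici (0:ℝ), HasDerivAt g (c * ξmin / 2 * f s * g s) s := by
      intro s hs
      have h1 : HasDerivAt g (c * ξmin / 2 * C₀) s := by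
        exact (((hasDerivAt_id s).const_mul (c * ξmin / 2 * C₀)).const_add 1).congr_deriv (mul_one _)
      convert h1 using 1
      have := (hgpos s hs).ne'
      simp only [hf]
      field_simp
    have hfd : ∀ s ∈ Set.Ici (0:ℝ),
        HasDerivAt f (0 * f s - c / 2 * ξmin * (f s) ^ 2) s := by
      intro s hs
      have hgne := (hgpos s hs).ne'
      have h1 := (hasDerivAt_const s C₀).div (hgd s hs) hgne
      refine h1.congr_deriv ?_
      simp only [hf]
      field_simp
      ring
    have hfnn : ∀ s ∈ Set.Ici (0:ℝ), 0 ≤ f s := fun s hs =>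
      div_nonneg hC0nn (hgpos s hs).le
    have hflam' : ∀ i, lam i ≤ f 0 * ξ i := fun i => by
      have : f 0 = C₀ := by simp [hf, hg0]
      rw [this]; exact hflam i
    exact master hk0 c hc D hMetzler 0 ξ hξpos heig lam hlam u hsol hnonneg hinit
      ξmin ξmax hξminle hξmaxle hξminpos f g hflam' hfnn hfd hg0 hgpos hgd t ht i
  · -- subcritical case μ < 0
    intro hμneg t ht i
    have hμabs : |μ| = -μ := abs_of_neg hμneg
    have hμne : μ ≠ 0 := hμneg.ne
    set g : ℝ → ℝ := fun t => 1 + c * ξmin / (2 * |μ|) * C₀ * (1 - Real.exp (μ * t))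
      with hg
    set f : ℝ → ℝ := fun t => C₀ * Real.exp (μ * t) / g t with hf
    have ha : 0 ≤ c * ξmin / (2 * |μ|) * C₀ :=
      mul_nonneg (div_nonneg (mul_nonneg hc.le hξminpos.le)
        (by positivity)) hC0nn
    have hexple : ∀ s ∈ Set.Ici (0:ℝ), Real.exp (μ * s) ≤ 1 := by
      intro s hs
      rw [← Real.exp_zero]
      apply Real.exp_le_exp.2
      have : μ * s ≤ 0 := mul_nonpos_iff.2 (Or.inr ⟨hμneg.le, hs⟩)
      linarith
    have hgpos : ∀ s ∈ Set.Ici (0:ℝ), 0 < g s := by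
      intro s hs
      have h1 : 0 ≤ 1 - Real.exp (μ * s) := by linarith [hexple s hs]
      have : 0 ≤ c * ξmin / (2 * |μ|) * C₀ * (1 - Real.exp (μ * s)) := mul_nonneg ha h1
      simp only [hg]; linarith
    have hg0 : g 0 = 1 := by simp [hg]
    have hexpd : ∀ s : ℝ, HasDerivAt (fun r => Real.exp (μ * r)) (Real.exp (μ * s) * μ) s :=
      fun s => ((hasDerivAt_id s).const_mul μ).exp.congr_deriv (by simp [mul_comm])
    have hgd : ∀ s ∈ Set.Ici (0:ℝ), HasDerivAt g (c * ξmin / 2 * f s * g s) s := by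
      intro s hs
      have h1 : HasDerivAt g
          (c * ξmin / (2 * |μ|) * C₀ * (-(Real.exp (μ * s) * μ))) s := by
        exact
          ((((hexpd s).const_sub 1)).const_mul (c * ξmin / (2 * |μ|) * C₀)).const_add 1
      convert h1 using 1
      have hgne := (hgpos s hs).ne'
      rw [hμabs]
      simp only [hf]
      field_simp
    have hfd : ∀ s ∈ Set.Ici (0:ℝ),
        HasDerivAt f (μ * f s - c / 2 * ξmin * (f s) ^ 2) s := by
      intro s hs
      have hgne := (hgpos s hs).ne'
      have hnum : HasDerivAt (fun r => C₀ * Real.exp (μ * r))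
          (C₀ * (Real.exp (μ * s) * μ)) s := (hexpd s).const_mul C₀
      have h1 := hnum.div (hgd s hs) hgne
      refine h1.congr_deriv ?_
      simp only [hf]
      field_simp
    have hfnn : ∀ s ∈ Set.Ici (0:ℝ), 0 ≤ f s := fun s hs =>
      div_nonneg (mul_nonneg hC0nn (Real.exp_pos _).le) (hgpos s hs).le
    have hflam' : ∀ i, lam i ≤ f 0 * ξ i := fun i => by
      have : f 0 = C₀ := by simp [hf, hg0]
      rw [this]; exact hflam i
    exact master hk0 c hc D hMetzler μ ξ hξpos heig lam hlam u hsol hnonneg hinit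
      ξmin ξmax hξminle hξmaxle hξminpos f g hflam' hfnn hfd hg0 hgpos hgd t ht i
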